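/- Under the setup of the previous statement, if $\omega \equiv 0 \pmod{\pi}$, then $\mathbb{E}[T_{n,Z}(\omega)^2] = n(n-1)\mathbb{E}[\tilde Z_1^2 \tilde Z_2^2] + \big(2n\sum_{h=1}^{n-1}\cos(2h\omega) - 2\sum_{h=1}^{n-1}h\cos(2h\omega)\big)\mathbb{E}[\tilde Z_1^2\tilde Z_2^2] = 2n(n-1)\mathbb{E}[\tilde Z_1^2 \tilde Z_2^2]$. -/

import Mathlib

set_option linter.unusedSectionVars false

open MeasureTheory ProbabilityTheory Finset

namespace Stmt10Aux

variable {ι : Type*} [Fintype ι]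

/-- Self-normalized coordinate. -/
noncomputable def psi (i : ι) (x : ι → ℝ) : ℝ := x i / Real.sqrt (∑ j, x j ^ 2)

lemma measurable_psi (i : ι) : Measurable (psi (ι := ι) i) := by
  apply Measurable.div (measurable_pi_apply i)
  exact (Finset.measurable_sum _ fun j _ => (measurable_pi_apply j).pow_const 2).sqrt

lemma abs_psi_le_one (i : ι) (x : ι → ℝ) : |psi i x| ≤ 1 := by
  unfold psi
  rcases eq_or_lt_of_le (Finset.sum_nonneg fun j _ => sq_nonneg (x j) :
      (0:ℝ) ≤ ∑ j, x j ^ 2) with h | h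
  · have hx : x i ^ 2 = 0 := by
      have := Finset.sum_eq_zero_iff_of_nonneg (fun j _ => sq_nonneg (x j)) |>.mp h.symm
      exact this i (Finset.mem_univ i)
    have : x i = 0 := by nlinarith [sq_nonneg (x i)]
    simp [this]
  · have hle : x i ^ 2 ≤ ∑ j, x j ^ 2 :=
      Finset.single_le_sum (fun j _ => sq_nonneg (x j)) (Finset.mem_univ i)
    have hs : 0 < Real.sqrt (∑ j, x j ^ 2) := Real.sqrt_pos.mpr h
    rw [abs_div, abs_of_nonneg hs.le, div_le_one hs]
    calc |x i| = Real.sqrt (x i ^ 2) := (Real.sqrt_sq_eq_abs _).symm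
    _ ≤ Real.sqrt (∑ j, x j ^ 2) := Real.sqrt_le_sqrt hle

variable [DecidableEq ι]

/-- flip the sign of coordinate `m`. -/
def flip (m : ι) (x : ι → ℝ) : ι → ℝ := fun j => if j = m then -x j else x j

lemma measurable_flip (m : ι) : Measurable (flip (ι := ι) m) := by
  apply measurable_pi_lambda
  intro j
  by_cases h : j = m
  · have : Measurable fun x : ι → ℝ => -(x m) := (measurable_pi_apply m).neg
    simpa [flip, h] using this
  · simpa [flip, h] using measurable_pi_apply j

lemma sum_sq_flip (m : ι) (x : ι → ℝ) : ∑ j, (flip m x j) ^ 2 = ∑ j, x j ^ 2 := by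
  refine Finset.sum_congr rfl fun j _ => ?_
  by_cases h : j = m <;> simp [flip, h]

lemma psi_flip (m i : ι) (x : ι → ℝ) :
    psi i (flip m x) = (if i = m then (-1:ℝ) else 1) * psi i x := by
  unfold psi
  rw [sum_sq_flip]
  by_cases h : i = m <;> simp [flip, h, neg_div]

lemma psi_comp_perm (e : ι ≃ ι) (i : ι) (x : ι → ℝ) :
    psi i (x ∘ e) = psi (e i) x := by
  unfold psi
  have : ∑ j, (x (e j)) ^ 2 = ∑ j, x j ^ 2 := Equiv.sum_comp e fun j => x j ^ 2
  simp [Function.comp, this]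

variable (μ₀ : Measure ℝ) [IsProbabilityMeasure μ₀]

noncomputable def pm : Measure (ι → ℝ) := Measure.pi fun _ : ι => μ₀

instance : IsProbabilityMeasure (pm (ι := ι) μ₀) := by
  unfold pm; infer_instance

lemma map_flip_pm (hneg : Measure.map (fun a : ℝ => -a) μ₀ = μ₀) (m : ι) :
    Measure.map (flip m) (pm (ι := ι) μ₀) = pm (ι := ι) μ₀ := by
  have hf : ∀ j : ι, MeasurePreserving (fun a : ℝ => if j = m then -a else a) μ₀ μ₀ := by
    intro j
    by_cases h : j = m
    · simpa [h] using (⟨measurable_neg, hneg⟩ : MeasurePreserving (fun a : ℝ => -a) μ₀ μ₀)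
    · simp only [h, ↓reduceIte]; exact MeasurePreserving.id μ₀
  have := MeasureTheory.measurePreserving_pi (fun _ : ι => μ₀) (fun _ : ι => μ₀) hf
  have heq : (fun x : ι → ℝ => fun j => if j = m then -(x j) else x j) = flip m := by
    funext x j; by_cases h : j = m <;> simp [flip, h]
  unfold pm
  rw [← heq]
  exact this.map_eq

lemma map_perm_pm (e : ι ≃ ι) :
    Measure.map (fun x : ι → ℝ => x ∘ e) (pm (ι := ι) μ₀) = pm (ι := ι) μ₀ := by
  have hm : Measurable (fun x : ι → ℝ => x ∘ e) :=
    measurable_pi_lambda _ fun i => measurable_pi_apply (e i)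
  refine (Measure.pi_eq fun s hs => ?_).symm
  rw [Measure.map_apply hm (MeasurableSet.univ_pi hs)]
  have : (fun x : ι → ℝ => x ∘ e) ⁻¹' (Set.pi Set.univ s) =
      Set.pi Set.univ (fun j => s (e.symm j)) := by
    ext x
    simp only [Set.mem_preimage, Set.mem_pi, Set.mem_univ, true_implies, Function.comp]
    constructor
    · intro h j; simpa using h (e.symm j)
    · intro h i; simpa using h (e i)
  rw [this]
  rw [show (pm (ι := ι) μ₀) = Measure.pi fun _ : ι => μ₀ from rfl, Measure.pi_pi]
  exact Equiv.prod_comp e.symm fun j => μ₀ (s j)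


lemma integrable_of_bdd_one {F : (ι → ℝ) → ℝ} (hFm : Measurable F)
    (hb : ∀ x, |F x| ≤ 1) : Integrable F (pm (ι := ι) μ₀) :=
  (integrable_const (1:ℝ)).mono' hFm.aestronglyMeasurable (Filter.Eventually.of_forall hb)

lemma integral_comp_flip (hneg : Measure.map (fun a : ℝ => -a) μ₀ = μ₀) (m : ι)
    {F : (ι → ℝ) → ℝ} (hF : AEStronglyMeasurable F (pm (ι := ι) μ₀)) :
    ∫ x, F (flip m x) ∂(pm (ι := ι) μ₀) = ∫ x, F x ∂(pm (ι := ι) μ₀) := by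
  have h := MeasureTheory.integral_map (μ := pm (ι := ι) μ₀) (φ := flip m) (f := F)
    (measurable_flip m).aemeasurable (by rw [map_flip_pm μ₀ hneg m]; exact hF)
  rw [map_flip_pm μ₀ hneg m] at h
  exact h.symm

lemma integral_comp_perm (e : ι ≃ ι)
    {F : (ι → ℝ) → ℝ} (hF : AEStronglyMeasurable F (pm (ι := ι) μ₀)) :
    ∫ x, F (x ∘ e) ∂(pm (ι := ι) μ₀) = ∫ x, F x ∂(pm (ι := ι) μ₀) := by
  have hm : Measurable (fun x : ι → ℝ => x ∘ e) :=
    measurable_pi_lambda _ fun i => measurable_pi_apply (e i)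
  have h := MeasureTheory.integral_map (μ := pm (ι := ι) μ₀)
    (φ := fun x : ι → ℝ => x ∘ e) (f := F)
    hm.aemeasurable (by rw [map_perm_pm μ₀ e]; exact hF)
  rw [map_perm_pm μ₀ e] at h
  exact h.symm

lemma measurable_quad (i j k l : ι) :
    Measurable (fun x : ι → ℝ => psi i x * psi j x * psi k x * psi l x) :=
  (((measurable_psi i).mul (measurable_psi j)).mul (measurable_psi k)).mul (measurable_psi l)

lemma integral_quad_eq_zero (hneg : Measure.map (fun a : ℝ => -a) μ₀ = μ₀)
    (i j k l m : ι)
    (hsgn : ((if i = m then (-1:ℝ) else 1) * (if j = m then (-1:ℝ) else 1)) *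
      ((if k = m then (-1:ℝ) else 1) * (if l = m then (-1:ℝ) else 1)) = -1) :
    ∫ x, psi i x * psi j x * psi k x * psi l x ∂(pm (ι := ι) μ₀) = 0 := by
  set F : (ι → ℝ) → ℝ := fun x => psi i x * psi j x * psi k x * psi l x with hFdef
  have hFm : Measurable F := measurable_quad i j k l
  have h1 : ∀ x, F (flip m x) = -F x := by
    intro x
    have : F (flip m x) = (((if i = m then (-1:ℝ) else 1) * (if j = m then (-1:ℝ) else 1)) *
        ((if k = m then (-1:ℝ) else 1) * (if l = m then (-1:ℝ) else 1))) * F x := by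
      simp only [hFdef, psi_flip]; ring
    rw [this, hsgn]; ring
  have h2 := integral_comp_flip (ι := ι) μ₀ hneg m hFm.aestronglyMeasurable
  have h3 : ∫ x, F (flip m x) ∂(pm (ι := ι) μ₀) = -∫ x, F x ∂(pm (ι := ι) μ₀) := by
    simp only [h1]
    exact integral_neg F
  rw [h3] at h2
  linarith

lemma integral_sq_pair (a b c d : ι) (hab : a ≠ b) (hcd : c ≠ d) :
    ∫ x, psi a x ^ 2 * psi b x ^ 2 ∂(pm (ι := ι) μ₀) =
      ∫ x, psi c x ^ 2 * psi d x ^ 2 ∂(pm (ι := ι) μ₀) := by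
  classical
  set s1 := Equiv.swap c a with hs1
  set j0 := s1.symm b with hj0
  have hcj0 : c ≠ j0 := by
    intro h
    apply hab
    have : s1 c = s1 j0 := by rw [← h]
    rw [hj0, Equiv.apply_symm_apply] at this
    rw [hs1] at this
    simpa [Equiv.swap_apply_left] using this
  set e : ι ≃ ι := (Equiv.swap d j0).trans s1 with he
  have hec : e c = a := by
    simp [he, Equiv.trans_apply, Equiv.swap_apply_of_ne_of_ne hcd hcj0, hs1,
      Equiv.swap_apply_left]
  have hed : e d = b := by
    simp [he, Equiv.trans_apply, Equiv.swap_apply_left, hj0, Equiv.apply_symm_apply]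
  set F : (ι → ℝ) → ℝ := fun x => psi c x ^ 2 * psi d x ^ 2 with hFdef
  have hFm : Measurable F :=
    ((measurable_psi c).pow_const 2).mul ((measurable_psi d).pow_const 2)
  have h := integral_comp_perm (ι := ι) μ₀ e hFm.aestronglyMeasurable
  have h1 : ∀ x, F (x ∘ e) = psi a x ^ 2 * psi b x ^ 2 := by
    intro x
    simp only [hFdef, psi_comp_perm, hec, hed]
  simp only [h1] at h
  exact h

end Stmt10Aux

open Stmt10Aux

theorem stmt_10 {Ω : Type*} [MeasureSpace Ω] (P : Measure Ω) [IsProbabilityMeasure P]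
    (n : ℕ) (hn : 2 ≤ n) (Z : ℕ → Ω → ℝ)
    (hmeas : ∀ i, Measurable (Z i))
    (hindep : iIndepFun Z P)
    (hident : ∀ i j, IdentDistrib (Z i) (Z j) P P)
    (hsymm : ∀ i, Measure.map (Z i) P = Measure.map (fun ω => -(Z i ω)) P)
    (hpos : ∀ᵐ ω ∂P, 0 < ∑ t ∈ Icc 1 n, Z t ω ^ 2)
    (tz : ℕ → Ω → ℝ)
    (htz : ∀ t ω, tz t ω = Z t ω / Real.sqrt (∑ s ∈ Icc 1 n, Z s ω ^ 2))
    (T : ℝ → Ω → ℝ)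
    (hT : ∀ ω' ω, T ω' ω =
      2 * ∑ h ∈ Icc 1 (n - 1),
        (∑ t ∈ Icc 1 (n - h), tz t ω * tz (t + h) ω) * Real.cos (h * ω'))
    (ω' : ℝ) (hω' : ∃ k : ℤ, ω' = k * Real.pi) :
    (∫ ω, T ω' ω ^ 2 ∂P =
        (n : ℝ) * ((n : ℝ) - 1) * ∫ ω, tz 1 ω ^ 2 * tz 2 ω ^ 2 ∂P
          + (2 * (n : ℝ) * ∑ h ∈ Icc 1 (n - 1), Real.cos (2 * h * ω')
              - 2 * ∑ h ∈ Icc 1 (n - 1), (h : ℝ) * Real.cos (2 * h * ω'))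
            * ∫ ω, tz 1 ω ^ 2 * tz 2 ω ^ 2 ∂P) ∧
      ∫ ω, T ω' ω ^ 2 ∂P =
        2 * (n : ℝ) * ((n : ℝ) - 1) * ∫ ω, tz 1 ω ^ 2 * tz 2 ω ^ 2 ∂P := by
  classical
  obtain ⟨k, hk⟩ := hω'
  set I : Finset ℕ := Finset.Icc 1 n with hI
  set μ₀ : Measure ℝ := Measure.map (Z 1) P with hμ₀
  haveI : IsProbabilityMeasure μ₀ := Measure.isProbabilityMeasure_map (hmeas 1).aemeasurable
  have hneg : Measure.map (fun a : ℝ => -a) μ₀ = μ₀ := by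
    rw [hμ₀, Measure.map_map measurable_neg (hmeas 1)]
    show Measure.map ((fun a => -a) ∘ Z 1) P = Measure.map (Z 1) P
    have : (fun a : ℝ => -a) ∘ Z 1 = fun ω => -(Z 1 ω) := rfl
    rw [this]
    exact (hsymm 1).symm
  set π : Measure (↥I → ℝ) := pm (ι := ↥I) μ₀ with hπ
  haveI : IsProbabilityMeasure π := by rw [hπ]; infer_instance
  set V : Ω → ↥I → ℝ := fun ω i => Z i.1 ω with hV
  have hVmeas : Measurable V := measurable_pi_lambda _ fun i => hmeas i.1
  have hmapV : Measure.map V P = π := by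
    rw [hπ]
    show Measure.map V P = Measure.pi fun _ : ↥I => μ₀
    refine (Measure.pi_eq fun s hs => ?_).symm
    rw [Measure.map_apply hVmeas (MeasurableSet.univ_pi hs)]
    set B : ℕ → Set ℝ := fun m => if h : m ∈ I then s ⟨m, h⟩ else Set.univ with hB
    have hBmeas : ∀ m, MeasurableSet (B m) := by
      intro m
      rw [hB]
      by_cases h : m ∈ I <;> simp [h]
      exact hs _
    have hpre : V ⁻¹' (Set.pi Set.univ s) = ⋂ m ∈ I, Z m ⁻¹' (B m) := by
      ext ω
      simp only [Set.mem_preimage, Set.mem_pi, Set.mem_univ, true_implies, Set.mem_iInter]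
      constructor
      · intro h m hm
        have := h ⟨m, hm⟩
        simp only [hB, hm, dif_pos]
        exact this
      · intro h i
        have := h i.1 i.2
        simp only [hB, i.2, dif_pos, Subtype.coe_eta] at this
        exact this
    rw [hpre, hindep.meas_biInter (fun m _ => ⟨B m, hBmeas m, rfl⟩)]
    have hPB : ∀ m ∈ I, P (Z m ⁻¹' B m) = μ₀ (B m) := by
      intro m _
      rw [hμ₀, ← (hident m 1).map_eq, Measure.map_apply (hmeas m) (hBmeas m)]
    rw [Finset.prod_congr rfl hPB]
    rw [← Finset.prod_coe_sort I (fun m => μ₀ (B m))]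
    refine Finset.prod_congr rfl fun i _ => ?_
    congr 1
    simp only [hB, i.2, dif_pos, Subtype.coe_eta]
  have htrans : ∀ F : (↥I → ℝ) → ℝ, Measurable F →
      ∫ ω, F (V ω) ∂P = ∫ x, F x ∂π := by
    intro F hF
    have h := MeasureTheory.integral_map (φ := V) (f := F) hVmeas.aemeasurable
      (by rw [hmapV]; exact hF.aestronglyMeasurable)
    rw [hmapV] at h
    exact h.symm
  -- the coordinate functions on the product space
  set ψ : ℕ → (↥I → ℝ) → ℝ :=
    fun t x => if h : t ∈ I then psi ⟨t, h⟩ x else 0 with hψ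
  have hψmeas : ∀ t, Measurable (ψ t) := by
    intro t
    rw [hψ]
    by_cases h : t ∈ I <;> simp [h]
    exact measurable_psi _
  have hψbdd : ∀ t x, |ψ t x| ≤ 1 := by
    intro t x
    rw [hψ]
    by_cases h : t ∈ I <;> simp [h]
    exact abs_psi_le_one _ x
  have hsum_eq : ∀ ω, (∑ j : ↥I, Z j.1 ω ^ 2) = ∑ s ∈ I, Z s ω ^ 2 :=
    fun ω => Finset.sum_coe_sort I (fun s => Z s ω ^ 2)
  have htzψ : ∀ t, t ∈ I → ∀ ω, tz t ω = ψ t (V ω) := by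
    intro t ht ω
    rw [htz t ω, hψ]
    simp only [ht, dif_pos]
    show _ = Z t ω / Real.sqrt (∑ j : ↥I, Z j.1 ω ^ 2)
    rw [hsum_eq]
  have h1I : 1 ∈ I := by rw [hI]; simp; omega
  have h2I : 2 ∈ I := by rw [hI]; simp; omega
  set i1 : ↥I := ⟨1, h1I⟩ with hi1
  set i2 : ↥I := ⟨2, h2I⟩ with hi2
  set E2 : ℝ := ∫ x, psi i1 x ^ 2 * psi i2 x ^ 2 ∂π with hE2
  have hE : ∫ ω, tz 1 ω ^ 2 * tz 2 ω ^ 2 ∂P = E2 := by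
    have h1 : ∀ ω, tz 1 ω ^ 2 * tz 2 ω ^ 2 =
        (fun x => ψ 1 x ^ 2 * ψ 2 x ^ 2) (V ω) := by
      intro ω; rw [htzψ 1 h1I ω, htzψ 2 h2I ω]
    rw [hE2]
    calc ∫ ω, tz 1 ω ^ 2 * tz 2 ω ^ 2 ∂P
        = ∫ ω, (fun x => ψ 1 x ^ 2 * ψ 2 x ^ 2) (V ω) ∂P := by
          exact integral_congr_ae (Filter.Eventually.of_forall h1)
      _ = ∫ x, ψ 1 x ^ 2 * ψ 2 x ^ 2 ∂π :=
          htrans _ (((hψmeas 1).pow_const 2).mul ((hψmeas 2).pow_const 2))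
      _ = ∫ x, psi i1 x ^ 2 * psi i2 x ^ 2 ∂π := by
          refine integral_congr_ae (Filter.Eventually.of_forall fun x => ?_)
          simp only [hψ, h1I, h2I, dif_pos, hi1, hi2]
  -- integrability of quadruple products
  have hInt : ∀ a b c d : ℕ,
      Integrable (fun x => ψ a x * ψ b x * ψ c x * ψ d x) π := by
    intro a b c d
    apply integrable_of_bdd_one μ₀
    · exact (((hψmeas a).mul (hψmeas b)).mul (hψmeas c)).mul (hψmeas d)
    · intro x
      have ha := hψbdd a x; have hb := hψbdd b x
      have hc := hψbdd c x; have hd := hψbdd d x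
      have h0a := abs_nonneg (ψ a x); have h0b := abs_nonneg (ψ b x)
      have h0c := abs_nonneg (ψ c x); have h0d := abs_nonneg (ψ d x)
      calc |ψ a x * ψ b x * ψ c x * ψ d x|
          = |ψ a x| * |ψ b x| * |ψ c x| * |ψ d x| := by
            rw [abs_mul, abs_mul, abs_mul]
        _ ≤ 1 :=
            mul_le_one₀ (mul_le_one₀ (mul_le_one₀ ha h0b hb) h0c hc) h0d hd
  have h12 : i1 ≠ i2 := by
    rw [hi1, hi2]
    simp only [ne_eq, Subtype.mk.injEq]
    omega
  have hzero : ∀ (a b c d m : ℕ) (ha : a ∈ I) (hb : b ∈ I) (hc : c ∈ I) (hd : d ∈ I)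
      (hm : m ∈ I),
      ((if a = m then (-1:ℝ) else 1) * (if b = m then (-1:ℝ) else 1)) *
        ((if c = m then (-1:ℝ) else 1) * (if d = m then (-1:ℝ) else 1)) = -1 →
      ∫ x, psi (⟨a, ha⟩ : ↥I) x * psi ⟨b, hb⟩ x * psi ⟨c, hc⟩ x * psi ⟨d, hd⟩ x ∂π = 0 := by
    intro a b c d m ha hb hc hd hm hsgn
    rw [hπ]
    exact integral_quad_eq_zero (ι := ↥I) μ₀ hneg ⟨a, ha⟩ ⟨b, hb⟩ ⟨c, hc⟩ ⟨d, hd⟩ ⟨m, hm⟩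
      (by simpa only [Subtype.mk.injEq] using hsgn)
  have hquad : ∀ t s h g : ℕ, h ∈ Finset.Icc 1 (n-1) → g ∈ Finset.Icc 1 (n-1) →
      t ∈ Finset.Icc 1 (n-h) → s ∈ Finset.Icc 1 (n-g) →
      ∫ x, ψ t x * ψ (t+h) x * ψ s x * ψ (s+g) x ∂π
        = if t = s ∧ h = g then E2 else 0 := by
    intro t s h g hh hg ht hs
    rw [Finset.mem_Icc] at hh hg ht hs
    have hb : 1 ≤ h ∧ 1 ≤ g ∧ 1 ≤ t ∧ 1 ≤ s ∧ t + h ≤ n ∧ s + g ≤ n := by omega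
    have htI : t ∈ I := by rw [hI, Finset.mem_Icc]; omega
    have hthI : t + h ∈ I := by rw [hI, Finset.mem_Icc]; omega
    have hsI : s ∈ I := by rw [hI, Finset.mem_Icc]; omega
    have hsgI : s + g ∈ I := by rw [hI, Finset.mem_Icc]; omega
    have hrw : ∀ x, ψ t x * ψ (t+h) x * ψ s x * ψ (s+g) x =
        psi (⟨t, htI⟩ : ↥I) x * psi ⟨t+h, hthI⟩ x * psi ⟨s, hsI⟩ x * psi ⟨s+g, hsgI⟩ x := by
      intro x
      simp only [hψ]
      rw [dif_pos htI, dif_pos hthI, dif_pos hsI, dif_pos hsgI]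
    simp only [hrw]
    by_cases hts : t = s ∧ h = g
    · rw [if_pos hts]
      obtain ⟨rfl, rfl⟩ := hts
      calc ∫ x, psi (⟨t, htI⟩ : ↥I) x * psi ⟨t+h, hthI⟩ x *
              psi ⟨t, hsI⟩ x * psi ⟨t+h, hsgI⟩ x ∂π
          = ∫ x, psi (⟨t, htI⟩ : ↥I) x ^ 2 * psi ⟨t+h, hthI⟩ x ^ 2 ∂π := by
            refine integral_congr_ae (Filter.Eventually.of_forall fun x => ?_)
            have e1 : (⟨t, hsI⟩ : ↥I) = ⟨t, htI⟩ := rfl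
            have e2 : (⟨t+h, hsgI⟩ : ↥I) = ⟨t+h, hthI⟩ := rfl
            rw [e1, e2]; ring
        _ = E2 := by
            rw [hE2, hπ]
            exact integral_sq_pair (ι := ↥I) μ₀ ⟨t, htI⟩ ⟨t+h, hthI⟩ i1 i2
              (by simp only [ne_eq, Subtype.mk.injEq]; omega) h12
    · rw [if_neg hts]
      by_cases hts' : t = s
      · -- then h ≠ g; flip coordinate t + h
        have hhg : h ≠ g := fun hh' => hts ⟨hts', hh'⟩
        refine hzero t (t+h) s (s+g) (t+h) htI hthI hsI hsgI hthI ?_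
        rw [if_neg (by omega), if_pos (rfl : t + h = t + h),
          if_neg (by omega), if_neg (by omega)]
        norm_num
      · by_cases htg : t = s + g
        · refine hzero t (t+h) s (s+g) (t+h) htI hthI hsI hsgI hthI ?_
          rw [if_neg (by omega), if_pos (rfl : t + h = t + h),
            if_neg (by omega), if_neg (by omega)]
          norm_num
        · refine hzero t (t+h) s (s+g) t htI hthI hsI hsgI htI ?_
          rw [if_pos (rfl : t = t), if_neg (by omega),
            if_neg (by omega), if_neg (by omega)]
          norm_num
  -- setup for the main computation
  set J : Finset ℕ := Finset.Icc 1 (n-1) with hJ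
  set c : ℕ → ℝ := fun h => Real.cos (h * ω') with hc
  set A : ℕ → (↥I → ℝ) → ℝ :=
    fun h x => ∑ t ∈ Finset.Icc 1 (n-h), ψ t x * ψ (t+h) x with hA
  set G : (↥I → ℝ) → ℝ := fun x => 2 * ∑ h ∈ J, A h x * c h with hG
  have hTG : ∀ ω, T ω' ω = G (V ω) := by
    intro ω
    rw [hT ω' ω]
    simp only [hG, hA, hc]
    congr 1
    refine Finset.sum_congr rfl fun h hh => ?_
    congr 1
    refine Finset.sum_congr rfl fun t ht => ?_
    rw [hJ, Finset.mem_Icc] at hh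
    rw [Finset.mem_Icc] at ht
    rw [htzψ t (by rw [hI, Finset.mem_Icc]; omega) ω,
      htzψ (t+h) (by rw [hI, Finset.mem_Icc]; omega) ω]
  have hGmeas : Measurable G := by
    simp only [hG, hA]
    apply Measurable.const_mul
    apply Finset.measurable_sum
    intro h _
    exact (Finset.measurable_sum _ fun t _ => (hψmeas t).mul (hψmeas (t+h))).mul_const _
  have step1 : ∫ ω, T ω' ω ^ 2 ∂P = ∫ x, G x ^ 2 ∂π := by
    have h1 : ∀ ω, T ω' ω ^ 2 = (fun x => G x ^ 2) (V ω) := fun ω => by rw [hTG ω]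
    rw [integral_congr_ae (Filter.Eventually.of_forall h1)]
    exact htrans _ (hGmeas.pow_const 2)
  have hGsq : ∀ x, G x ^ 2 = ∑ h ∈ J, ∑ g ∈ J, ∑ t ∈ Finset.Icc 1 (n-h),
      ∑ s ∈ Finset.Icc 1 (n-g),
        (ψ t x * ψ (t+h) x * ψ s x * ψ (s+g) x) * (4 * c h * c g) := by
    intro x
    calc G x ^ 2 = 4 * ((∑ h ∈ J, A h x * c h) * (∑ g ∈ J, A g x * c g)) := by
          simp only [hG]; ring
      _ = 4 * ∑ h ∈ J, ∑ g ∈ J, (A h x * c h) * (A g x * c g) := by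
          rw [Finset.sum_mul_sum]
      _ = ∑ h ∈ J, ∑ g ∈ J, 4 * ((A h x * c h) * (A g x * c g)) := by
          rw [Finset.mul_sum]
          exact Finset.sum_congr rfl fun h _ => Finset.mul_sum _ _ _
      _ = ∑ h ∈ J, ∑ g ∈ J, ∑ t ∈ Finset.Icc 1 (n-h), ∑ s ∈ Finset.Icc 1 (n-g),
            (ψ t x * ψ (t+h) x * ψ s x * ψ (s+g) x) * (4 * c h * c g) := by
          refine Finset.sum_congr rfl fun h _ => Finset.sum_congr rfl fun g _ => ?_
          calc 4 * ((A h x * c h) * (A g x * c g))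
              = (A h x * A g x) * (4 * c h * c g) := by ring
            _ = (∑ t ∈ Finset.Icc 1 (n-h), ∑ s ∈ Finset.Icc 1 (n-g),
                  (ψ t x * ψ (t+h) x) * (ψ s x * ψ (s+g) x)) * (4 * c h * c g) := by
                simp only [hA]
                rw [Finset.sum_mul_sum]
            _ = ∑ t ∈ Finset.Icc 1 (n-h), (∑ s ∈ Finset.Icc 1 (n-g),
                  (ψ t x * ψ (t+h) x) * (ψ s x * ψ (s+g) x)) * (4 * c h * c g) := by
                rw [Finset.sum_mul]
            _ = ∑ t ∈ Finset.Icc 1 (n-h), ∑ s ∈ Finset.Icc 1 (n-g),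
                  (ψ t x * ψ (t+h) x * ψ s x * ψ (s+g) x) * (4 * c h * c g) := by
                refine Finset.sum_congr rfl fun t _ => ?_
                rw [Finset.sum_mul]
                exact Finset.sum_congr rfl fun s _ => by ring
  have hint4 : ∀ h g t s : ℕ, Integrable
      (fun x => (ψ t x * ψ (t+h) x * ψ s x * ψ (s+g) x) * (4 * c h * c g)) π :=
    fun h g t s => (hInt t (t+h) s (s+g)).mul_const _
  have hint3 : ∀ h g t : ℕ, Integrable (fun x => ∑ s ∈ Finset.Icc 1 (n-g),
      (ψ t x * ψ (t+h) x * ψ s x * ψ (s+g) x) * (4 * c h * c g)) π :=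
    fun h g t => integrable_finset_sum _ fun s _ => hint4 h g t s
  have hint2 : ∀ h g : ℕ, Integrable (fun x => ∑ t ∈ Finset.Icc 1 (n-h),
      ∑ s ∈ Finset.Icc 1 (n-g),
      (ψ t x * ψ (t+h) x * ψ s x * ψ (s+g) x) * (4 * c h * c g)) π :=
    fun h g => integrable_finset_sum _ fun t _ => hint3 h g t
  have hint1 : ∀ h : ℕ, Integrable (fun x => ∑ g ∈ J, ∑ t ∈ Finset.Icc 1 (n-h),
      ∑ s ∈ Finset.Icc 1 (n-g),
      (ψ t x * ψ (t+h) x * ψ s x * ψ (s+g) x) * (4 * c h * c g)) π :=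
    fun h => integrable_finset_sum _ fun g _ => hint2 h g
  have key2 : ∫ x, G x ^ 2 ∂π = ∑ h ∈ J, ∑ g ∈ J, ∑ t ∈ Finset.Icc 1 (n-h),
      ∑ s ∈ Finset.Icc 1 (n-g), (if t = s ∧ h = g then E2 else 0) * (4 * c h * c g) := by
    calc ∫ x, G x ^ 2 ∂π
        = ∫ x, (∑ h ∈ J, ∑ g ∈ J, ∑ t ∈ Finset.Icc 1 (n-h), ∑ s ∈ Finset.Icc 1 (n-g),
            (ψ t x * ψ (t+h) x * ψ s x * ψ (s+g) x) * (4 * c h * c g)) ∂π :=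
          integral_congr_ae (Filter.Eventually.of_forall hGsq)
      _ = ∑ h ∈ J, ∑ g ∈ J, ∑ t ∈ Finset.Icc 1 (n-h), ∑ s ∈ Finset.Icc 1 (n-g),
            (if t = s ∧ h = g then E2 else 0) * (4 * c h * c g) := by
          rw [integral_finset_sum _ (fun h _ => hint1 h)]
          refine Finset.sum_congr rfl fun h hh => ?_
          rw [integral_finset_sum _ (fun g _ => hint2 h g)]
          refine Finset.sum_congr rfl fun g hg => ?_
          rw [integral_finset_sum _ (fun t _ => hint3 h g t)]
          refine Finset.sum_congr rfl fun t ht => ?_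
          rw [integral_finset_sum _ (fun s _ => hint4 h g t s)]
          refine Finset.sum_congr rfl fun s hs => ?_
          rw [integral_mul_const, hquad t s h g hh hg ht hs]
  have hcard : ∀ h : ℕ, (Finset.Icc 1 (n-h)).card = n - h := by
    intro h; rw [Nat.card_Icc]; omega
  have key3 : ∀ h ∈ J, (∑ g ∈ J, ∑ t ∈ Finset.Icc 1 (n-h), ∑ s ∈ Finset.Icc 1 (n-g),
      (if t = s ∧ h = g then E2 else 0) * (4 * c h * c g))
        = ((n - h : ℕ) : ℝ) * (E2 * (4 * (c h * c h))) := by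
    intro h hh
    rw [Finset.sum_eq_single_of_mem h hh ?side]
    case side =>
      intro g _ hne
      apply Finset.sum_eq_zero; intro t _
      apply Finset.sum_eq_zero; intro s _
      rw [if_neg (fun hcon => hne (hcon.2.symm)), zero_mul]
    have hmain : ∀ t ∈ Finset.Icc 1 (n-h), (∑ s ∈ Finset.Icc 1 (n-h),
        (if t = s ∧ h = h then E2 else 0) * (4 * c h * c h))
          = E2 * (4 * (c h * c h)) := by
      intro t ht
      have e : ∀ s : ℕ, (if t = s ∧ h = h then E2 else 0) * (4 * c h * c h)
          = if t = s then E2 * (4 * (c h * c h)) else 0 := by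
        intro s
        by_cases hts : t = s
        · rw [if_pos ⟨hts, rfl⟩, if_pos hts]; ring
        · rw [if_neg (fun hcon => hts hcon.1), if_neg hts, zero_mul]
      rw [Finset.sum_congr rfl (fun s _ => e s), Finset.sum_ite_eq, if_pos ht]
    rw [Finset.sum_congr rfl hmain, Finset.sum_const, hcard h, nsmul_eq_mul]
  have hc2 : ∀ h : ℕ, c h * c h = 1 := by
    intro h
    simp only [hc, hk]
    have e : (h : ℝ) * ((k : ℝ) * Real.pi) = ((h * k : ℤ) : ℝ) * Real.pi := by
      push_cast; ring
    rw [e, ← abs_mul_abs_self (Real.cos _), Real.abs_cos_int_mul_pi, mul_one]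
  have hg2 : (∑ h ∈ J, h) * 2 = n * (n - 1) := by
    have hr : Finset.range n = insert 0 J := by
      ext m
      rw [hJ]
      simp only [Finset.mem_range, Finset.mem_insert, Finset.mem_Icc]
      omega
    have := Finset.sum_range_id_mul_two n
    rw [hr, Finset.sum_insert (by rw [hJ]; simp)] at this
    simpa using this
  have hsumreal : ∑ h ∈ J, (h : ℝ) = (n : ℝ) * ((n : ℝ) - 1) / 2 := by
    have h1 : ((∑ h ∈ J, h : ℕ) : ℝ) = ∑ h ∈ J, (h : ℝ) := by push_cast; rfl
    have h2 : ((∑ h ∈ J, h : ℕ) : ℝ) * 2 = (n : ℝ) * ((n : ℝ) - 1) := by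
      have := congrArg (fun m : ℕ => (m : ℝ)) hg2
      push_cast at this
      rw [Nat.cast_sub (by omega)] at this
      push_cast at this
      linarith [this]
    rw [h1] at h2
    linarith
  have hsub : ∑ h ∈ J, ((n - h : ℕ) : ℝ) = ∑ h ∈ J, (h : ℝ) := by
    refine Finset.sum_nbij' (fun h => n - h) (fun h => n - h) ?_ ?_ ?_ ?_ ?_
    · intro a ha; simp only [hJ, Finset.mem_Icc] at ha ⊢; omega
    · intro a ha; simp only [hJ, Finset.mem_Icc] at ha ⊢; omega
    · intro a ha; simp only [hJ, Finset.mem_Icc] at ha ⊢; omega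
    · intro a ha; simp only [hJ, Finset.mem_Icc] at ha ⊢; omega
    · intro a ha; rfl
  have key : ∫ ω, T ω' ω ^ 2 ∂P =
      2 * (n : ℝ) * ((n : ℝ) - 1) * ∫ ω, tz 1 ω ^ 2 * tz 2 ω ^ 2 ∂P := by
    rw [step1, key2, Finset.sum_congr rfl key3, hE]
    calc ∑ h ∈ J, ((n - h : ℕ) : ℝ) * (E2 * (4 * (c h * c h)))
        = ∑ h ∈ J, ((n - h : ℕ) : ℝ) * (E2 * 4) := by
          refine Finset.sum_congr rfl fun h _ => ?_
          rw [hc2 h, mul_one]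
      _ = (∑ h ∈ J, ((n - h : ℕ) : ℝ)) * (E2 * 4) := by
          rw [Finset.sum_mul]
      _ = ((n : ℝ) * ((n : ℝ) - 1) / 2) * (E2 * 4) := by
          rw [hsub, hsumreal]
      _ = 2 * (n : ℝ) * ((n : ℝ) - 1) * E2 := by ring
  have hcos2 : ∀ h : ℕ, Real.cos (2 * (h : ℝ) * ω') = 1 := by
    intro h
    rw [hk]
    have e : 2 * (h : ℝ) * ((k : ℝ) * Real.pi) = ((h * k : ℤ) : ℝ) * (2 * Real.pi) := by
      push_cast; ring
    rw [e]
    exact Real.cos_int_mul_two_pi _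
  have hcardJ : ((J.card : ℕ) : ℝ) = (n : ℝ) - 1 := by
    rw [hJ, Nat.card_Icc]
    rw [show n - 1 + 1 - 1 = n - 1 from rfl, Nat.cast_sub (by omega)]
    norm_num
  refine ⟨?_, key⟩
  rw [key]
  simp only [hcos2, mul_one]
  rw [Finset.sum_const, nsmul_eq_mul, mul_one, hcardJ, hsumreal]
  ring
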